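/- Fix δ > 0 and let W be a standard d-dimensional Brownian motion started at 0. Then Y_{0,1}(W) < ∞ almost surely and E_0[Y_{0,1}(W)] < ∞, where Y_{0,1}(W) = inf{ ∫_0^1 |φ̇(u)|² du : φ absolutely continuous on [0,1], φ(0) = 0, φ(1) = W(1), sup_{u ∈ [0,1]} |W(u) − φ(u)| ≤ δ/2 }. -/

import Mathlib

open MeasureTheory ProbabilityTheory Filter
open scoped ENNReal NNReal Topology

noncomputable section

/-- A standard `d`-dimensional Brownian motion started at `x₀`, defined through its
finite-dimensional distributions: measurable in `ω`, a.s. continuous paths starting at `x₀`,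
independent increments, independent coordinates, and Gaussian increments of variance `t - s`. -/
structure IsBrownianMotion (d : ℕ) {Ω : Type*} [MeasurableSpace Ω] (P : Measure Ω)
    (W : Ω → ℝ → EuclideanSpace ℝ (Fin d)) (x₀ : EuclideanSpace ℝ (Fin d)) : Prop where
  meas : ∀ t : ℝ, Measurable fun ω => W ω t
  start : ∀ᵐ ω ∂P, W ω 0 = x₀
  cont : ∀ᵐ ω ∂P, Continuous (W ω)
  indep_incr : ∀ (n : ℕ) (t : ℕ → ℝ), Monotone t → 0 ≤ t 0 →
    iIndepFun
      (fun (i : Fin n) ω => W ω (t (i + 1)) - W ω (t i)) P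
  indep_coord : ∀ s t : ℝ, 0 ≤ s → s ≤ t →
    iIndepFun
      (fun (i : Fin d) ω => (W ω t - W ω s) i) P
  gauss_incr : ∀ s t : ℝ, 0 ≤ s → s ≤ t → ∀ i : Fin d,
    Measure.map (fun ω => (W ω t - W ω s) i) P = gaussianReal 0 (Real.toNNReal (t - s))

/-- The constrained Dirichlet energy `Y_{s,t}(W)`: the infimum of `∫_s^t |φ̇(u)|² du` over
absolutely continuous paths `φ : [s,t] → ℝ^d` with `φ(s) = W(s)`, `φ(t) = W(t)` and
`sup_{u ∈ [s,t]} |W(u) − φ(u)| ≤ δ/2` (the infimum over the empty set being `+∞`).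
An absolutely continuous path is encoded by an integrable derivative `g`, via
`φ(u) = W(s) + ∫_s^u g(v) dv`, and its Dirichlet energy is `∫_s^t ‖g(v)‖² dv ∈ [0,∞]`. -/
def energyInf (d : ℕ) (δ : ℝ) (W : ℝ → EuclideanSpace ℝ (Fin d)) (s t : ℝ) : ℝ≥0∞ :=
  sInf {e : ℝ≥0∞ | ∃ g : ℝ → EuclideanSpace ℝ (Fin d),
    MeasureTheory.IntegrableOn g (Set.Ioc s t) ∧
    W s + (∫ v in Set.Ioc s t, g v) = W t ∧
    (∀ u ∈ Set.Icc s t, ‖W u - (W s + ∫ v in Set.Ioc s u, g v)‖ ≤ δ / 2) ∧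
    e = ∫⁻ v in Set.Ioc s t, ENNReal.ofReal (‖g v‖ ^ 2)}


section Aux

open Set

variable {d : ℕ}

/-- Max of norms of dyadic increments at scale `2^{-m}` over `[0,2]`. -/
def nnM (d : ℕ) (f : ℝ → EuclideanSpace ℝ (Fin d)) (m : ℕ) : ℝ≥0 :=
  (Finset.range (2 ^ (m + 1))).sup fun k =>
    ‖f (((k : ℝ) + 1) / 2 ^ m) - f ((k : ℝ) / 2 ^ m)‖₊

/-- Tail sum of the dyadic increment maxima, in `ℝ≥0∞`. -/
def SSe (d : ℕ) (f : ℝ → EuclideanSpace ℝ (Fin d)) (n : ℕ) : ℝ≥0∞ :=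
  ∑' m : ℕ, (nnM d f (n + m) : ℝ≥0∞)

lemma SSe_succ (f : ℝ → EuclideanSpace ℝ (Fin d)) (n : ℕ) :
    SSe d f n = (nnM d f n : ℝ≥0∞) + SSe d f (n + 1) := by
  have h0 : SSe d f n = ∑' m : ℕ, (nnM d f (n + m) : ℝ≥0∞) := rfl
  have h1 : SSe d f (n + 1) = ∑' m : ℕ, (nnM d f (n + (m + 1)) : ℝ≥0∞) := by
    rw [SSe]
    exact tsum_congr fun m => by rw [show n + 1 + m = n + (m + 1) by omega]
  rw [h0, h1, tsum_eq_zero_add' ENNReal.summable, add_zero]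

lemma le_nnM (f : ℝ → EuclideanSpace ℝ (Fin d)) (m k : ℕ) (hk : k < 2 ^ (m + 1)) :
    ‖f (((k : ℝ) + 1) / 2 ^ m) - f ((k : ℝ) / 2 ^ m)‖₊ ≤ nnM d f m := by
  rw [nnM]
  exact Finset.le_sup (f := fun k : ℕ => ‖f (((k:ℝ) + 1) / 2 ^ m) - f ((k:ℝ) / 2 ^ m)‖₊)
    (Finset.mem_range.mpr hk)

/-- Chaining bound: the oscillation of a continuous path over windows of size `2^{-n}`
inside `[0,2]` is bounded by twice the tail sum `SSe`. -/
lemma chaining {f : ℝ → EuclideanSpace ℝ (Fin d)} (hf : Continuous f) (n : ℕ) {u v : ℝ}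
    (hu : u ∈ Set.Icc (0:ℝ) 2) (hv : v ∈ Set.Icc (0:ℝ) 2)
    (huv : |u - v| ≤ ((2:ℝ) ^ n)⁻¹) :
    (‖f u - f v‖₊ : ℝ≥0∞) ≤ 2 * SSe d f n := by
  have h2 : ∀ m : ℕ, (0:ℝ) < 2 ^ m := fun m => by positivity
  -- single grid step bound
  have grid_step : ∀ (m : ℕ) (a : ℤ), 0 ≤ a → a + 1 ≤ 2 ^ (m + 1) →
      (‖f (((a:ℝ) + 1) / 2 ^ m) - f ((a:ℝ) / 2 ^ m)‖₊ : ℝ≥0∞) ≤ (nnM d f m : ℝ≥0∞) := by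
    intro m a ha hup
    lift a to ℕ using ha with k
    have hk : k < 2 ^ (m + 1) := by
      have h' : k + 1 ≤ 2 ^ (m + 1) := by exact_mod_cast hup
      omega
    have hle := le_nnM f m k hk
    have hcast : (((k:ℤ):ℝ)) = (k:ℝ) := by push_cast; ring
    rw [hcast]
    exact ENNReal.coe_le_coe.mpr hle
  set dy : ℕ → ℝ → ℝ := fun m x => (⌊x * 2 ^ m⌋ : ℝ) / 2 ^ m with hdy
  have hdy_le : ∀ (m : ℕ) (x : ℝ), dy m x ≤ x := by
    intro m x
    rw [hdy]
    dsimp only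
    rw [div_le_iff₀ (h2 m)]
    exact Int.floor_le _
  have hdy_gt : ∀ (m : ℕ) (x : ℝ), x - ((2:ℝ) ^ m)⁻¹ < dy m x := by
    intro m x
    rw [hdy]
    dsimp only
    rw [lt_div_iff₀ (h2 m), sub_mul, inv_mul_cancel₀ (h2 m).ne']
    have := Int.lt_floor_add_one (x * 2 ^ m)
    linarith
  have hdy_tendsto : ∀ x : ℝ, Filter.Tendsto (fun m => dy m x) Filter.atTop (nhds x) := by
    intro x
    have hpow : Filter.Tendsto (fun m : ℕ => (2:ℝ) ^ m) Filter.atTop Filter.atTop :=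
      tendsto_pow_atTop_atTop_of_one_lt one_lt_two
    have hinv : Filter.Tendsto (fun m : ℕ => ((2:ℝ) ^ m)⁻¹) Filter.atTop (nhds 0) :=
      hpow.inv_tendsto_atTop
    have hlow : Filter.Tendsto (fun m : ℕ => x - ((2:ℝ) ^ m)⁻¹) Filter.atTop (nhds x) := by
      simpa using tendsto_const_nhds.sub hinv
    exact tendsto_of_tendsto_of_tendsto_of_le_of_le hlow tendsto_const_nhds
      (fun m => (hdy_gt m x).le) (fun m => hdy_le m x)
  -- one dyadic refinement step
  have hstep : ∀ (m : ℕ) (x : ℝ), x ∈ Set.Icc (0:ℝ) 2 →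
      (‖f (dy (m+1) x) - f (dy m x)‖₊ : ℝ≥0∞) ≤ (nnM d f (m+1) : ℝ≥0∞) := by
    intro m x hx
    obtain ⟨hx0, hx2⟩ := hx
    set a : ℤ := ⌊x * 2 ^ m⌋ with hadef
    have ha0 : 0 ≤ a := Int.floor_nonneg.mpr (mul_nonneg hx0 (h2 m).le)
    have h1 : (a:ℝ) ≤ x * 2 ^ m := Int.floor_le _
    have h1' : x * 2 ^ m < (a:ℝ) + 1 := Int.lt_floor_add_one _
    have hkey : ⌊x * 2 ^ (m+1)⌋ = 2 * a ∨ ⌊x * 2 ^ (m+1)⌋ = 2 * a + 1 := by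
      have hlow : (2 * a : ℤ) ≤ ⌊x * 2 ^ (m+1)⌋ := by
        apply Int.le_floor.mpr
        push_cast
        rw [pow_succ]
        nlinarith
      have hhigh : ⌊x * 2 ^ (m+1)⌋ < 2 * a + 2 := by
        apply Int.floor_lt.mpr
        push_cast
        rw [pow_succ]
        nlinarith
      omega
    have hdyeq : dy m x = ((2 * a : ℤ) : ℝ) / 2 ^ (m+1) := by
      rw [hdy]
      dsimp only
      rw [← hadef, pow_succ]
      push_cast
      field_simp
    rcases hkey with hk | hk
    · have heq : dy (m+1) x = dy m x := by
        rw [hdy]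
        dsimp only
        rw [hk, ← hadef, pow_succ]
        push_cast
        field_simp
      rw [heq, sub_self]
      simp
    · have h5 : (2 * a + 1 : ℤ) ≤ 2 ^ (m+2) := by
        have hfl : ((2 * a + 1 : ℤ) : ℝ) ≤ x * 2 ^ (m+1) := by
          rw [← hk]; exact Int.floor_le _
        have hle : x * 2 ^ (m+1) ≤ 2 * 2 ^ (m+1) := by nlinarith [h2 (m+1)]
        have hcast : ((2 * a + 1 : ℤ) : ℝ) ≤ (((2:ℤ) ^ (m+2) : ℤ) : ℝ) := by
          push_cast at hfl ⊢
          rw [pow_succ 2 (m+1)]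
          linarith
        exact_mod_cast hcast
      have hdyeq1 : dy (m+1) x = (((2 * a : ℤ) : ℝ) + 1) / 2 ^ (m+1) := by
        rw [hdy]
        dsimp only
        rw [hk]
        push_cast
        ring_nf
      rw [hdyeq1, hdyeq]
      exact grid_step (m+1) (2 * a) (by omega) h5
  -- telescoping + limit: distance from x to its level-n dyadic approximation
  have happrox : ∀ x : ℝ, x ∈ Set.Icc (0:ℝ) 2 →
      (‖f x - f (dy n x)‖₊ : ℝ≥0∞) ≤ SSe d f (n+1) := by
    intro x hx
    have htel : ∀ p : ℕ, (‖f (dy (n+p) x) - f (dy n x)‖₊ : ℝ≥0∞)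
        ≤ ∑ j ∈ Finset.range p, (nnM d f (n+1+j) : ℝ≥0∞) := by
      intro p
      induction p with
      | zero => simp
      | succ p ih =>
          calc (‖f (dy (n+(p+1)) x) - f (dy n x)‖₊ : ℝ≥0∞)
              ≤ (‖f (dy (n+p+1) x) - f (dy (n+p) x)‖₊ : ℝ≥0∞)
                + (‖f (dy (n+p) x) - f (dy n x)‖₊ : ℝ≥0∞) := by
                rw [show n + (p+1) = n + p + 1 by omega]
                rw [show f (dy (n+p+1) x) - f (dy n x)
                  = (f (dy (n+p+1) x) - f (dy (n+p) x)) + (f (dy (n+p) x) - f (dy n x)) by abel]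
                exact_mod_cast nnnorm_add_le _ _
            _ ≤ (nnM d f (n+p+1) : ℝ≥0∞) + ∑ j ∈ Finset.range p, (nnM d f (n+1+j) : ℝ≥0∞) :=
                add_le_add (hstep (n+p) x hx) ih
            _ = ∑ j ∈ Finset.range (p+1), (nnM d f (n+1+j) : ℝ≥0∞) := by
                rw [Finset.sum_range_succ, show n+1+p = n+p+1 by omega, add_comm]
    have htel' : ∀ p : ℕ, (‖f (dy (n+p) x) - f (dy n x)‖₊ : ℝ≥0∞) ≤ SSe d f (n+1) := by
      intro p
      refine (htel p).trans ?_
      have : ∀ j : ℕ, (nnM d f (n+1+j) : ℝ≥0∞) = (fun j => (nnM d f (n+1+j) : ℝ≥0∞)) j :=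
        fun j => rfl
      exact ENNReal.sum_le_tsum (Finset.range p)
    have hlim : Filter.Tendsto (fun p => (‖f (dy (n+p) x) - f (dy n x)‖₊ : ℝ≥0∞))
        Filter.atTop (nhds (‖f x - f (dy n x)‖₊ : ℝ≥0∞)) := by
      have h1 : Filter.Tendsto (fun p : ℕ => dy (n+p) x) Filter.atTop (nhds x) := by
        have h := (hdy_tendsto x).comp (tendsto_add_atTop_nat n)
        exact h.congr fun p => by simp only [Function.comp_apply]; rw [Nat.add_comm]
      have h2' : Filter.Tendsto (fun p => f (dy (n+p) x) - f (dy n x)) Filter.atTop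
          (nhds (f x - f (dy n x))) := ((hf.tendsto x).comp h1).sub tendsto_const_nhds
      exact (ENNReal.continuous_coe.tendsto _).comp h2'.nnnorm
    exact le_of_tendsto hlim (Filter.Eventually.of_forall htel')
  -- grid points at level n are adjacent
  have hgrid : (‖f (dy n u) - f (dy n v)‖₊ : ℝ≥0∞) ≤ (nnM d f n : ℝ≥0∞) := by
    have hadj : ∀ x y : ℝ, x ∈ Set.Icc (0:ℝ) 2 → y ∈ Set.Icc (0:ℝ) 2 →
        ⌊y * 2 ^ n⌋ + 1 = ⌊x * 2 ^ n⌋ →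
        (‖f (dy n x) - f (dy n y)‖₊ : ℝ≥0∞) ≤ (nnM d f n : ℝ≥0∞) := by
      intro x y hx hy hxy
      have hb0 : 0 ≤ ⌊y * 2 ^ n⌋ := Int.floor_nonneg.mpr (mul_nonneg hy.1 (h2 n).le)
      have h4 : (⌊x * 2 ^ n⌋ : ℤ) ≤ (2:ℤ) ^ (n+1) := by
        have h1 : ((⌊x * 2 ^ n⌋ : ℤ) : ℝ) ≤ x * 2 ^ n := Int.floor_le _
        have h3 : x * 2 ^ n ≤ 2 * 2 ^ n := by nlinarith [h2 n, hx.2, hx.1]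
        have hc : ((⌊x * 2 ^ n⌋ : ℤ) : ℝ) ≤ (((2:ℤ) ^ (n+1) : ℤ) : ℝ) := by
          push_cast
          rw [pow_succ]
          linarith
        exact_mod_cast hc
      have hup : ⌊y * 2 ^ n⌋ + 1 ≤ (2:ℤ) ^ (n+1) := by omega
      have hdx : dy n x = (((⌊y * 2 ^ n⌋ : ℤ) : ℝ) + 1) / 2 ^ n := by
        rw [hdy]
        dsimp only
        rw [← hxy]
        push_cast
        ring
      have hdyy : dy n y = ((⌊y * 2 ^ n⌋ : ℤ) : ℝ) / 2 ^ n := by rw [hdy]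
      rw [hdx, hdyy]
      exact grid_step n ⌊y * 2 ^ n⌋ hb0 hup
    have hnear : |(⌊u * 2 ^ n⌋ : ℤ) - ⌊v * 2 ^ n⌋| ≤ 1 := by
      have habs := abs_le.mp huv
      have hpos := h2 n
      have h1 : u * 2 ^ n ≤ v * 2 ^ n + 1 := by
        have hm := mul_le_mul_of_nonneg_right habs.2 hpos.le
        rw [sub_mul, inv_mul_cancel₀ hpos.ne'] at hm
        linarith
      have h1' : v * 2 ^ n ≤ u * 2 ^ n + 1 := by
        have h3 : v - u ≤ ((2:ℝ)^n)⁻¹ := by linarith [habs.1]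
        have hm := mul_le_mul_of_nonneg_right h3 hpos.le
        rw [sub_mul, inv_mul_cancel₀ hpos.ne'] at hm
        linarith
      have h2a : ⌊u * 2 ^ n⌋ ≤ ⌊v * 2 ^ n⌋ + 1 := by
        have := Int.floor_le_floor (R := ℝ) h1
        rwa [Int.floor_add_one] at this
      have h2b : ⌊v * 2 ^ n⌋ ≤ ⌊u * 2 ^ n⌋ + 1 := by
        have := Int.floor_le_floor (R := ℝ) h1'
        rwa [Int.floor_add_one] at this
      rw [abs_le]
      omega
    rcases lt_trichotomy (⌊u * 2 ^ n⌋ : ℤ) ⌊v * 2 ^ n⌋ with hlt | heq | hgt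
    · have hfl : ⌊u * 2 ^ n⌋ + 1 = ⌊v * 2 ^ n⌋ := by
        have := abs_le.mp hnear
        omega
      rw [show f (dy n u) - f (dy n v) = -(f (dy n v) - f (dy n u)) by abel, nnnorm_neg]
      exact hadj v u hv hu hfl
    · have heq' : dy n u = dy n v := by rw [hdy]; dsimp only; rw [heq]
      rw [heq', sub_self]
      simp
    · have hfl : ⌊v * 2 ^ n⌋ + 1 = ⌊u * 2 ^ n⌋ := by
        have := abs_le.mp hnear
        omega
      exact hadj u v hu hv hfl
  -- final assembly
  calc (‖f u - f v‖₊ : ℝ≥0∞)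
      ≤ (‖f u - f (dy n u)‖₊ : ℝ≥0∞) + (‖f (dy n u) - f (dy n v)‖₊ : ℝ≥0∞)
        + (‖f (dy n v) - f v‖₊ : ℝ≥0∞) := by
        rw [show f u - f v = (f u - f (dy n u)) + (f (dy n u) - f (dy n v)) + (f (dy n v) - f v)
          by abel]
        calc (‖(f u - f (dy n u)) + (f (dy n u) - f (dy n v)) + (f (dy n v) - f v)‖₊ : ℝ≥0∞)
            ≤ (‖(f u - f (dy n u)) + (f (dy n u) - f (dy n v))‖₊ : ℝ≥0∞)
              + (‖f (dy n v) - f v‖₊ : ℝ≥0∞) := by exact_mod_cast nnnorm_add_le _ _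
          _ ≤ _ := by
              gcongr
              exact_mod_cast nnnorm_add_le _ _
    _ ≤ SSe d f (n+1) + (nnM d f n : ℝ≥0∞) + SSe d f (n+1) := by
        refine add_le_add (add_le_add (happrox u hu) hgrid) ?_
        rw [show f (dy n v) - f v = -(f v - f (dy n v)) by abel, nnnorm_neg]
        exact happrox v hv
    _ ≤ 2 * SSe d f n := by
        rw [SSe_succ f n, two_mul]
        calc SSe d f (n+1) + (nnM d f n : ℝ≥0∞) + SSe d f (n+1)
            = ((nnM d f n : ℝ≥0∞) + SSe d f (n+1)) + SSe d f (n+1) := by ring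
          _ ≤ ((nnM d f n : ℝ≥0∞) + SSe d f (n+1))
              + ((nnM d f n : ℝ≥0∞) + SSe d f (n+1)) := by
              gcongr
              exact le_add_self

/-- The key deterministic construction: if the chaining tail sum at scale `n` is at most
`δ/16`, then the constrained Dirichlet energy is at most `δ² 4^n`. -/
lemma energy_bound {δ : ℝ} (hδ : 0 < δ) {f : ℝ → EuclideanSpace ℝ (Fin d)}
    (hf : Continuous f) (n : ℕ) (hS : SSe d f n ≤ ENNReal.ofReal (δ / 16)) :
    energyInf d δ f 0 1 ≤ ENNReal.ofReal (δ ^ 2 * 4 ^ n) := by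
  have h2n : (1:ℝ) ≤ 2 ^ n := one_le_pow₀ one_le_two
  set ε : ℝ := ((2:ℝ) ^ n)⁻¹ with hεdef
  have hε0 : 0 < ε := by positivity
  have hε1 : ε ≤ 1 := by
    rw [hεdef]
    exact inv_le_one_of_one_le₀ h2n
  -- oscillation bound from chaining
  have hosc : ∀ u v : ℝ, u ∈ Set.Icc (0:ℝ) 2 → v ∈ Set.Icc (0:ℝ) 2 → |u - v| ≤ ε →
      ‖f u - f v‖ ≤ δ / 8 := by
    intro u v hu hv huv
    have hc := (chaining hf n hu hv huv).trans
      (by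
        calc 2 * SSe d f n ≤ 2 * ENNReal.ofReal (δ / 16) := by gcongr
          _ = ENNReal.ofReal (δ / 8) := by
            rw [show (2:ℝ≥0∞) = ENNReal.ofReal 2 by norm_num, ← ENNReal.ofReal_mul (by norm_num)]
            congr 1
            ring)
    rw [← ENNReal.ofReal_coe_nnreal, coe_nnnorm] at hc
    exact (ENNReal.ofReal_le_ofReal_iff (by positivity)).mp hc
  have hfint : ∀ a b : ℝ, IntervalIntegrable f volume a b := fun a b =>
    hf.intervalIntegrable a b
  have hfε : Continuous fun v : ℝ => f (v + ε) := hf.comp (continuous_id.add continuous_const)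
  set A : ℝ → EuclideanSpace ℝ (Fin d) := fun u => ε⁻¹ • ∫ w in u..(u+ε), f w with hAdef
  set c : EuclideanSpace ℝ (Fin d) := (f 1 - f 0) - (A 1 - A 0) with hcdef
  set g : ℝ → EuclideanSpace ℝ (Fin d) := fun v => ε⁻¹ • (f (v + ε) - f v) + c with hgdef
  have hgcont : Continuous g := by rw [hgdef]; fun_prop
  have hgint : IntegrableOn g (Set.Ioc (0:ℝ) 1) :=
    (hgcont.integrableOn_Icc).mono_set Set.Ioc_subset_Icc_self
  -- the integral of g up to u
  have key : ∀ u : ℝ, 0 ≤ u → (∫ v in Set.Ioc (0:ℝ) u, g v) = (A u - A 0) + u • c := by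
    intro u hu
    rw [← intervalIntegral.integral_of_le hu]
    have hint1 : IntervalIntegrable (fun v => ε⁻¹ • (f (v + ε) - f v)) volume 0 u :=
      (by fun_prop : Continuous fun v => ε⁻¹ • (f (v + ε) - f v)).intervalIntegrable 0 u
    have h1 : ∫ v in (0:ℝ)..u, g v
        = (∫ v in (0:ℝ)..u, ε⁻¹ • (f (v + ε) - f v)) + ∫ _ in (0:ℝ)..u,
          (c : EuclideanSpace ℝ (Fin d)) := by
      rw [hgdef]
      exact intervalIntegral.integral_add hint1 (intervalIntegrable_const)
    have h2 : ∫ v in (0:ℝ)..u, ε⁻¹ • (f (v + ε) - f v)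
        = ε⁻¹ • ((∫ v in (0:ℝ)..u, f (v + ε)) - ∫ v in (0:ℝ)..u, f v) := by
      rw [← intervalIntegral.integral_sub (hfε.intervalIntegrable 0 u) (hfint 0 u),
        ← intervalIntegral.integral_smul]
    have h3 : ∫ v in (0:ℝ)..u, f (v + ε) = ∫ w in ε..(u+ε), f w := by
      have := intervalIntegral.integral_comp_add_right (a := (0:ℝ)) (b := u) f ε
      rwa [zero_add] at this
    have h4 : (∫ w in ε..(u+ε), f w) - ∫ v in (0:ℝ)..u, f v
        = (∫ w in u..(u+ε), f w) - ∫ w in (0:ℝ)..ε, f w := by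
      have ha : (∫ w in ε..u, f w) + ∫ w in u..(u+ε), f w = ∫ w in ε..(u+ε), f w :=
        intervalIntegral.integral_add_adjacent_intervals (hfint _ _) (hfint _ _)
      have hb : (∫ w in (0:ℝ)..ε, f w) + ∫ w in ε..u, f w = ∫ w in (0:ℝ)..u, f w :=
        intervalIntegral.integral_add_adjacent_intervals (hfint _ _) (hfint _ _)
      rw [← ha, ← hb]
      abel
    have h5 : ∫ _ in (0:ℝ)..u, (c : EuclideanSpace ℝ (Fin d)) = u • c := by
      rw [intervalIntegral.integral_const, sub_zero]
    rw [h1, h2, h3, h4, h5, hAdef]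
    dsimp only
    rw [zero_add, smul_sub]
  -- endpoint condition
  have hend : f 0 + (∫ v in Set.Ioc (0:ℝ) 1, g v) = f 1 := by
    rw [key 1 zero_le_one, one_smul, hcdef]
    abel
  -- closeness of f to its running average
  have hfA : ∀ w : ℝ, w ∈ Set.Icc (0:ℝ) 1 → ‖f w - A w‖ ≤ δ / 8 := by
    intro w hw
    have hconst : (∫ _ in w..(w+ε), f w) = ε • f w := by
      rw [intervalIntegral.integral_const, add_sub_cancel_left]
    have hrepr : f w - A w = ε⁻¹ • ∫ v in w..(w+ε), (f w - f v) := by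
      rw [intervalIntegral.integral_sub (intervalIntegrable_const) (hfint _ _), hconst, hAdef]
      dsimp only
      rw [smul_sub, smul_smul, inv_mul_cancel₀ hε0.ne', one_smul]
    have hbnd : ‖∫ v in w..(w+ε), (f w - f v)‖ ≤ (δ / 8) * |(w + ε) - w| := by
      apply intervalIntegral.norm_integral_le_of_norm_le_const
      intro x hx
      rw [Set.uIoc_of_le (by linarith)] at hx
      have hx1 := hx.1
      have hx2 := hx.2
      apply hosc w x ⟨hw.1, by linarith [hw.2]⟩ ⟨by linarith [hw.1], by linarith [hw.2]⟩
      rw [abs_sub_comm, abs_of_nonneg (by linarith)]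
      linarith
    rw [hrepr, norm_smul, Real.norm_eq_abs, abs_of_pos (inv_pos.mpr hε0)]
    rw [add_sub_cancel_left, abs_of_pos hε0] at hbnd
    calc ε⁻¹ * ‖∫ v in w..(w+ε), (f w - f v)‖ ≤ ε⁻¹ * ((δ / 8) * ε) := by
          apply mul_le_mul_of_nonneg_left hbnd (by positivity)
      _ = δ / 8 := by field_simp
  have hcnorm : ‖c‖ ≤ δ / 4 := by
    have h1 := hfA 1 ⟨zero_le_one, le_refl 1⟩
    have h0 := hfA 0 ⟨le_refl 0, zero_le_one⟩
    calc ‖c‖ = ‖(f 1 - A 1) - (f 0 - A 0)‖ := by rw [hcdef]; congr 1; abel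
      _ ≤ ‖f 1 - A 1‖ + ‖f 0 - A 0‖ := norm_sub_le _ _
      _ ≤ δ / 8 + δ / 8 := add_le_add h1 h0
      _ = δ / 4 := by ring
  -- tube condition
  have htube : ∀ u ∈ Set.Icc (0:ℝ) 1, ‖f u - (f 0 + ∫ v in Set.Ioc (0:ℝ) u, g v)‖ ≤ δ / 2 := by
    intro u hu
    rw [key u hu.1]
    have hrepr : f u - (f 0 + ((A u - A 0) + u • c))
        = ((f u - A u) - (f 0 - A 0)) - u • c := by abel
    rw [hrepr]
    have husmul : ‖u • c‖ ≤ δ / 4 := by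
      rw [norm_smul, Real.norm_eq_abs, abs_of_nonneg hu.1]
      calc u * ‖c‖ ≤ 1 * (δ / 4) :=
            mul_le_mul hu.2 hcnorm (norm_nonneg _) zero_le_one
        _ = δ / 4 := one_mul _
    calc ‖((f u - A u) - (f 0 - A 0)) - u • c‖
        ≤ ‖(f u - A u) - (f 0 - A 0)‖ + ‖u • c‖ := norm_sub_le _ _
      _ ≤ (‖f u - A u‖ + ‖f 0 - A 0‖) + ‖u • c‖ := by gcongr; exact norm_sub_le _ _
      _ ≤ (δ / 8 + δ / 8) + δ / 4 := by
          gcongr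
          · exact hfA u hu
          · exact hfA 0 ⟨le_refl 0, zero_le_one⟩
      _ = δ / 2 := by ring
  -- pointwise bound on the energy density
  have hgbnd : ∀ v ∈ Set.Ioc (0:ℝ) 1, ‖g v‖ ^ 2 ≤ δ ^ 2 * 4 ^ n := by
    intro v hv
    have hv1 := hv.1
    have hv2 := hv.2
    have hosc' : ‖f (v + ε) - f v‖ ≤ δ / 8 := by
      apply hosc (v + ε) v ⟨by linarith, by linarith⟩ ⟨by linarith, by linarith⟩
      rw [add_sub_cancel_left, abs_of_pos hε0]
    have hnorm : ‖g v‖ ≤ 2 ^ n * δ := by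
      calc ‖g v‖ ≤ ‖ε⁻¹ • (f (v + ε) - f v)‖ + ‖c‖ := norm_add_le _ _
        _ = ε⁻¹ * ‖f (v + ε) - f v‖ + ‖c‖ := by
            rw [norm_smul, Real.norm_eq_abs, abs_of_pos (inv_pos.mpr hε0)]
        _ ≤ 2 ^ n * (δ / 8) + δ / 4 := by
            have : ε⁻¹ = (2:ℝ) ^ n := by rw [hεdef, inv_inv]
            rw [this]
            gcongr
        _ ≤ 2 ^ n * δ := by nlinarith
    calc ‖g v‖ ^ 2 ≤ ((2:ℝ) ^ n * δ) ^ 2 :=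
          pow_le_pow_left₀ (norm_nonneg _) hnorm 2
      _ = δ ^ 2 * 4 ^ n := by
          rw [mul_pow, show ((2:ℝ) ^ n) ^ 2 = 4 ^ n by
            rw [← pow_mul, mul_comm, pow_mul]; norm_num]
          ring
  -- conclusion
  have hmem : (∫⁻ v in Set.Ioc (0:ℝ) 1, ENNReal.ofReal (‖g v‖ ^ 2)) ∈
      {e : ℝ≥0∞ | ∃ g' : ℝ → EuclideanSpace ℝ (Fin d),
        MeasureTheory.IntegrableOn g' (Set.Ioc 0 1) ∧
        f 0 + (∫ v in Set.Ioc 0 1, g' v) = f 1 ∧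
        (∀ u ∈ Set.Icc (0:ℝ) 1, ‖f u - (f 0 + ∫ v in Set.Ioc 0 u, g' v)‖ ≤ δ / 2) ∧
        e = ∫⁻ v in Set.Ioc 0 1, ENNReal.ofReal (‖g' v‖ ^ 2)} :=
    ⟨g, hgint, hend, htube, rfl⟩
  refine le_trans (sInf_le hmem) ?_
  calc ∫⁻ v in Set.Ioc (0:ℝ) 1, ENNReal.ofReal (‖g v‖ ^ 2)
      ≤ ∫⁻ _ in Set.Ioc (0:ℝ) 1, ENNReal.ofReal (δ ^ 2 * 4 ^ n) := by
        apply setLIntegral_mono measurable_const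
        intro v hv
        exact ENNReal.ofReal_le_ofReal (hgbnd v hv)
    _ = ENNReal.ofReal (δ ^ 2 * 4 ^ n) := by
        rw [setLIntegral_const]
        simp [Real.volume_Ioc]

/-- The 8th moment of a standard Gaussian, as an extended nonneg real. -/
def C8 : ℝ≥0∞ := ∫⁻ x, ENNReal.ofReal (x ^ 8) ∂(gaussianReal 0 1)

lemma C8_lt_top : C8 < ⊤ := by
  have h1 : (1 : ℝ≥0) ≠ 0 := one_ne_zero
  have hg : Measurable fun x : ℝ => ENNReal.ofReal (x ^ 8) := by fun_prop
  rw [C8, gaussianReal_of_var_ne_zero _ h1,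
    lintegral_withDensity_eq_lintegral_mul _ (measurable_gaussianPDF 0 1) hg]
  have hint : Integrable (fun x : ℝ => gaussianPDFReal 0 1 x * x ^ 8) := by
    have hbase : Integrable fun x : ℝ => x ^ (8:ℝ) * Real.exp (-(1/2) * x ^ 2) :=
      integrable_rpow_mul_exp_neg_mul_sq (by norm_num) (by norm_num)
    refine (hbase.const_mul ((Real.sqrt (2 * Real.pi))⁻¹)).congr ?_
    refine Filter.Eventually.of_forall fun x => ?_
    have habs : x ^ (8:ℝ) = x ^ (8:ℕ) := by
      rw [show ((8:ℝ)) = ((8:ℕ):ℝ) by norm_num, Real.rpow_natCast]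
    simp only [gaussianPDFReal, habs, NNReal.coe_one, mul_one, sub_zero]
    rw [show -x ^ 2 / 2 = -(1/2) * x ^ 2 by ring]
    ring
  have := hint.lintegral_lt_top
  refine lt_of_eq_of_lt ?_ this
  refine lintegral_congr fun x => ?_
  simp only [Pi.mul_apply, gaussianPDF]
  rw [← ENNReal.ofReal_mul (gaussianPDFReal_nonneg 0 1 x)]

lemma lintegral_pow8_gaussian (v : ℝ≥0) :
    ∫⁻ x, ENNReal.ofReal (x ^ 8) ∂(gaussianReal 0 v) = ENNReal.ofReal ((v:ℝ) ^ 4) * C8 := by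
  have hmap : gaussianReal 0 v
      = Measure.map (fun x => Real.sqrt v * x) (gaussianReal 0 1) := by
    rw [gaussianReal_map_const_mul]
    congr 1
    · simp
    · ext
      simp [Real.sq_sqrt v.coe_nonneg]
  have hmeas : Measurable fun x : ℝ => ENNReal.ofReal (x ^ 8) :=
    (measurable_id.pow_const 8).ennreal_ofReal
  rw [hmap, lintegral_map hmeas (measurable_const_mul _)]
  have hpt : ∀ x : ℝ, ENNReal.ofReal ((Real.sqrt v * x) ^ 8)
      = ENNReal.ofReal ((v:ℝ) ^ 4) * ENNReal.ofReal (x ^ 8) := by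
    intro x
    rw [← ENNReal.ofReal_mul (by positivity)]
    congr 1
    have : (Real.sqrt v) ^ 8 = (v:ℝ) ^ 4 := by
      rw [show (8:ℕ) = 2 * 4 by norm_num, pow_mul, Real.sq_sqrt v.coe_nonneg]
    rw [mul_pow, this]
  simp_rw [hpt]
  rw [lintegral_const_mul _ hmeas]
  rfl

variable {Ω : Type*} [MeasurableSpace Ω] {P : Measure Ω}
variable {W : Ω → ℝ → EuclideanSpace ℝ (Fin d)}

lemma measurable_coord (hW : IsBrownianMotion d P W 0) (s t : ℝ) (i : Fin d) :
    Measurable fun ω => (W ω t - W ω s) i := by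
  have := ((EuclideanSpace.proj i).continuous.measurable.comp (hW.meas t)).sub
    ((EuclideanSpace.proj i).continuous.measurable.comp (hW.meas s))
  exact this

lemma measurable_nnM (hW : IsBrownianMotion d P W 0) (m : ℕ) :
    Measurable fun ω => nnM d (W ω) m := by
  have : ∀ s : Finset ℕ, Measurable fun ω =>
      s.sup fun k => ‖W ω (((k : ℝ) + 1) / 2 ^ m) - W ω ((k : ℝ) / 2 ^ m)‖₊ := by
    intro s
    induction s using Finset.induction_on with
    | empty => simpa using measurable_const
    | insert _ _ _ ih =>
        simp only [Finset.sup_insert]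
        exact
          (((hW.meas _).sub (hW.meas _)).nnnorm).sup ih
  exact this _

lemma moment8 (hW : IsBrownianMotion d P W 0) {s t : ℝ} (hs : 0 ≤ s) (hst : s ≤ t) :
    ∫⁻ ω, ENNReal.ofReal (‖W ω t - W ω s‖ ^ 8) ∂P
      ≤ ENNReal.ofReal ((d:ℝ) ^ 4 * (t - s) ^ 4) * C8 := by
  classical
  have hts : (0:ℝ) ≤ t - s := sub_nonneg.mpr hst
  have hg : Measurable fun x : ℝ => ENNReal.ofReal (x ^ 8) := by fun_prop
  have hXi : ∀ i : Fin d, Measurable fun ω => (W ω t - W ω s) i :=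
    fun i => measurable_coord hW s t i
  -- pointwise bound
  have hpt : ∀ ω, ENNReal.ofReal (‖W ω t - W ω s‖ ^ 8)
      ≤ ENNReal.ofReal ((d:ℝ) ^ 3) *
        ∑ i : Fin d, ENNReal.ofReal (((W ω t - W ω s) i) ^ 8) := by
    intro ω
    set x := W ω t - W ω s with hx
    have hn : ‖x‖ ^ 8 = (∑ i : Fin d, (x i) ^ 2) ^ 4 := by
      have h1 : ‖x‖ = Real.sqrt (∑ i : Fin d, (x i) ^ 2) := by
        rw [EuclideanSpace.norm_eq]
        congr 1
        exact Finset.sum_congr rfl fun i _ => by rw [Real.norm_eq_abs, sq_abs]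
      rw [h1, show (8:ℕ) = 2 * 4 by norm_num, pow_mul,
        Real.sq_sqrt (Finset.sum_nonneg fun i _ => sq_nonneg _)]
    have hsum : (∑ i : Fin d, (x i) ^ 2) ^ 4 ≤ (d:ℝ) ^ 3 * ∑ i : Fin d, (x i) ^ 8 := by
      have h2 := pow_sum_div_card_le_sum_pow (s := Finset.univ)
        (f := fun i : Fin d => (x i) ^ 2) (fun i _ => sq_nonneg _) 3
      simp only [Finset.card_univ, Fintype.card_fin] at h2
      have h3 : ∀ i : Fin d, ((x i) ^ 2) ^ (3 + 1) = (x i) ^ 8 := fun i => by ring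
      rcases Nat.eq_zero_or_pos d with hd0 | hd0
      · subst hd0; simp
      · rw [div_le_iff₀ (by positivity)] at h2
        calc (∑ i : Fin d, (x i) ^ 2) ^ 4 = (∑ i : Fin d, (x i) ^ 2) ^ (3+1) := by norm_num
          _ ≤ (∑ i : Fin d, ((x i) ^ 2) ^ (3+1)) * (d:ℝ) ^ 3 := h2
          _ = (d:ℝ) ^ 3 * ∑ i : Fin d, (x i) ^ 8 := by
              rw [mul_comm]; congr 1; exact Finset.sum_congr rfl fun i _ => h3 i
    calc ENNReal.ofReal (‖x‖ ^ 8) ≤ ENNReal.ofReal ((d:ℝ) ^ 3 * ∑ i : Fin d, (x i) ^ 8) := by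
          rw [hn]; exact ENNReal.ofReal_le_ofReal hsum
      _ = ENNReal.ofReal ((d:ℝ) ^ 3) * ENNReal.ofReal (∑ i : Fin d, (x i) ^ 8) := by
          rw [ENNReal.ofReal_mul (by positivity)]
      _ = ENNReal.ofReal ((d:ℝ) ^ 3) * ∑ i : Fin d, ENNReal.ofReal ((x i) ^ 8) := by
          rw [ENNReal.ofReal_sum_of_nonneg (fun i _ => by positivity)]
  have hcoordint : ∀ i : Fin d,
      ∫⁻ ω, ENNReal.ofReal (((W ω t - W ω s) i) ^ 8) ∂P
        = ENNReal.ofReal ((t - s) ^ 4) * C8 := by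
    intro i
    calc ∫⁻ ω, ENNReal.ofReal (((W ω t - W ω s) i) ^ 8) ∂P
        = ∫⁻ x, ENNReal.ofReal (x ^ 8) ∂(Measure.map (fun ω => (W ω t - W ω s) i) P) :=
          (lintegral_map hg (hXi i)).symm
      _ = ENNReal.ofReal (((Real.toNNReal (t - s)):ℝ) ^ 4) * C8 := by
          rw [hW.gauss_incr s t hs hst i, lintegral_pow8_gaussian]
      _ = ENNReal.ofReal ((t - s) ^ 4) * C8 := by rw [Real.coe_toNNReal _ hts]
  calc ∫⁻ ω, ENNReal.ofReal (‖W ω t - W ω s‖ ^ 8) ∂P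
      ≤ ∫⁻ ω, ENNReal.ofReal ((d:ℝ) ^ 3) *
          ∑ i : Fin d, ENNReal.ofReal (((W ω t - W ω s) i) ^ 8) ∂P := lintegral_mono hpt
    _ = ENNReal.ofReal ((d:ℝ) ^ 3) *
          ∑ i : Fin d, ∫⁻ ω, ENNReal.ofReal (((W ω t - W ω s) i) ^ 8) ∂P := by
        rw [lintegral_const_mul _ (Finset.measurable_sum _
          (fun i _ => ((hXi i).pow_const 8).ennreal_ofReal)),
          lintegral_finset_sum _ (fun i _ => ((hXi i).pow_const 8).ennreal_ofReal)]
    _ = ENNReal.ofReal ((d:ℝ) ^ 3) * ((d : ℝ≥0∞) * (ENNReal.ofReal ((t - s) ^ 4) * C8)) := by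
        rw [Finset.sum_congr rfl fun i _ => hcoordint i, Finset.sum_const, Finset.card_univ,
          Fintype.card_fin, nsmul_eq_mul]
    _ = ENNReal.ofReal ((d:ℝ) ^ 4 * (t - s) ^ 4) * C8 := by
        rw [show ((d : ℝ≥0∞)) = ENNReal.ofReal ((d:ℝ)) from (ENNReal.ofReal_natCast d).symm,
          ← mul_assoc, ← mul_assoc, ← ENNReal.ofReal_mul (by positivity),
          ← ENNReal.ofReal_mul (by positivity)]
        congr 2

lemma measurable_SSe (hW : IsBrownianMotion d P W 0) (n : ℕ) :
    Measurable fun ω => SSe d (W ω) n :=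
  Measurable.ennreal_tsum fun m => (measurable_nnM hW (n + m)).coe_nnreal_ennreal

lemma tail_bound [IsProbabilityMeasure P] (hd : 1 ≤ d) {δ : ℝ} (hδ : 0 < δ)
    (hW : IsBrownianMotion d P W 0) :
    ∃ K : ℝ, 0 ≤ K ∧ ∀ n : ℕ,
      P {ω | ¬ SSe d (W ω) n ≤ ENNReal.ofReal (δ / 16)}
        ≤ ENNReal.ofReal (K * (1/8) ^ n) := by
  classical
  set Cr : ℝ := C8.toReal with hCrdef
  have hCr0 : 0 ≤ Cr := ENNReal.toReal_nonneg
  have hC8eq : ENNReal.ofReal Cr = C8 := ENNReal.ofReal_toReal C8_lt_top.ne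
  set b : ℕ → ℝ := fun j => (δ / 128) * (7/8) ^ j with hbdef
  have hbpos : ∀ j, 0 < b j := fun j => by positivity
  have hbsum : Summable b :=
    (summable_geometric_of_lt_one (by norm_num) (by norm_num)).mul_left _
  have hbtsum : ∑' j, b j = δ / 16 := by
    rw [hbdef, tsum_mul_left, tsum_geometric_of_lt_one (by norm_num) (by norm_num)]
    norm_num
    ring
  set q : ℝ := ((8:ℝ)/7) ^ 8 / 8 with hqdef
  have hq0 : 0 ≤ q := by positivity
  have hq1 : q < 1 := by rw [hqdef]; norm_num
  set KK : ℝ := 2 * (d:ℝ) ^ 4 * Cr * (128 / δ) ^ 8 with hKKdef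
  have hKK0 : 0 ≤ KK := by positivity
  refine ⟨KK * (1 - q)⁻¹, by positivity, fun n => ?_⟩
  -- the event is covered by increment events
  have hincl : {ω | ¬ SSe d (W ω) n ≤ ENNReal.ofReal (δ / 16)}
      ⊆ ⋃ j : ℕ, ⋃ k ∈ Finset.range (2 ^ (n + j + 1)),
        {ω | ENNReal.ofReal ((b j) ^ 8) ≤ ENNReal.ofReal
          (‖W ω (((k:ℝ) + 1) / 2 ^ (n + j)) - W ω ((k:ℝ) / 2 ^ (n + j))‖ ^ 8)} := by
    intro ω hω
    simp only [Set.mem_iUnion, Set.mem_setOf_eq]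
    by_contra hcon
    push_neg at hcon
    apply hω
    have hnn : ∀ j : ℕ, nnM d (W ω) (n + j) ≤ Real.toNNReal (b j) := by
      intro j
      rw [nnM]
      apply Finset.sup_le
      intro k hk
      have hlt := hcon j k hk
      have hreal : ‖W ω (((k:ℝ) + 1) / 2 ^ (n + j)) - W ω ((k:ℝ) / 2 ^ (n + j))‖ ^ 8
          < (b j) ^ 8 := by
        exact (ENNReal.ofReal_lt_ofReal_iff (by positivity)).mp hlt
      have hle : ‖W ω (((k:ℝ) + 1) / 2 ^ (n + j)) - W ω ((k:ℝ) / 2 ^ (n + j))‖ ≤ b j :=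
        le_of_pow_le_pow_left₀ (by norm_num) (hbpos j).le hreal.le
      rw [← NNReal.coe_le_coe, coe_nnnorm, Real.coe_toNNReal _ (hbpos j).le]
      exact hle
    calc SSe d (W ω) n ≤ ∑' j : ℕ, ENNReal.ofReal (b j) := by
          apply ENNReal.tsum_le_tsum
          intro j
          calc ((nnM d (W ω) (n + j) : ℝ≥0) : ℝ≥0∞)
              ≤ ((Real.toNNReal (b j) : ℝ≥0) : ℝ≥0∞) := ENNReal.coe_le_coe.mpr (hnn j)
            _ = ENNReal.ofReal (b j) := rfl
      _ = ENNReal.ofReal (∑' j, b j) :=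
          (ENNReal.ofReal_tsum_of_nonneg (fun j => (hbpos j).le) hbsum).symm
      _ = ENNReal.ofReal (δ / 16) := by rw [hbtsum]
  -- probability of a single increment event
  have hEv : ∀ (j m k : ℕ),
      P {ω | ENNReal.ofReal ((b j) ^ 8) ≤ ENNReal.ofReal
          (‖W ω (((k:ℝ) + 1) / 2 ^ m) - W ω ((k:ℝ) / 2 ^ m)‖ ^ 8)}
        ≤ ENNReal.ofReal ((d:ℝ) ^ 4 * (((2:ℝ) ^ m)⁻¹) ^ 4 * Cr / (b j) ^ 8) := by
    intro j m k
    set s : ℝ := (k:ℝ) / 2 ^ m with hsdef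
    set t : ℝ := ((k:ℝ) + 1) / 2 ^ m with htdef
    have hs : 0 ≤ s := by positivity
    have hst : s ≤ t := by
      rw [hsdef, htdef, div_le_div_iff_of_pos_right (by positivity : (0:ℝ) < 2 ^ m)]
      linarith
    have hts : t - s = ((2:ℝ) ^ m)⁻¹ := by
      rw [hsdef, htdef]
      field_simp
      ring
    have hmeas : AEMeasurable (fun ω => ENNReal.ofReal (‖W ω t - W ω s‖ ^ 8)) P :=
      ((((hW.meas t).sub (hW.meas s)).norm.pow_const 8).ennreal_ofReal).aemeasurable
    have hne : ENNReal.ofReal ((b j) ^ 8) ≠ 0 :=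
      (ENNReal.ofReal_pos.mpr (by positivity)).ne'
    have hmar := meas_ge_le_lintegral_div hmeas hne ENNReal.ofReal_ne_top
    calc P {ω | ENNReal.ofReal ((b j) ^ 8) ≤ ENNReal.ofReal (‖W ω t - W ω s‖ ^ 8)}
        ≤ (∫⁻ ω, ENNReal.ofReal (‖W ω t - W ω s‖ ^ 8) ∂P) / ENNReal.ofReal ((b j) ^ 8) :=
          hmar
      _ ≤ (ENNReal.ofReal ((d:ℝ) ^ 4 * (t - s) ^ 4) * C8) / ENNReal.ofReal ((b j) ^ 8) := by
          gcongr
          exact moment8 hW hs hst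
      _ = ENNReal.ofReal ((d:ℝ) ^ 4 * (((2:ℝ) ^ m)⁻¹) ^ 4 * Cr) / ENNReal.ofReal ((b j) ^ 8) := by
          rw [hts, ← hC8eq, ← ENNReal.ofReal_mul (by positivity)]
      _ = ENNReal.ofReal ((d:ℝ) ^ 4 * (((2:ℝ) ^ m)⁻¹) ^ 4 * Cr / (b j) ^ 8) := by
          rw [ENNReal.ofReal_div_of_pos (by positivity)]
  -- the key arithmetic identity
  have harith : ∀ j : ℕ, ((2:ℝ) ^ (n + j + 1)) *
      ((d:ℝ) ^ 4 * (((2:ℝ) ^ (n + j))⁻¹) ^ 4 * Cr / (b j) ^ 8)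
      = (KK * (1/8) ^ n) * q ^ j := by
    intro j
    have h2n0 : ((2:ℝ)) ^ n ≠ 0 := by positivity
    have h2j0 : ((2:ℝ)) ^ j ≠ 0 := by positivity
    have h7j0 : ((7:ℝ)) ^ j ≠ 0 := by positivity
    have hδ0 : δ ≠ 0 := hδ.ne'
    have h8n : ((8:ℝ)) ^ n = ((2:ℝ) ^ n) ^ 3 := by
      rw [show (8:ℝ) = 2 ^ 3 by norm_num, ← pow_mul, mul_comm 3 n, pow_mul]
    have h8j : ((8:ℝ)) ^ j = ((2:ℝ) ^ j) ^ 3 := by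
      rw [show (8:ℝ) = 2 ^ 3 by norm_num, ← pow_mul, mul_comm 3 j, pow_mul]
    have hqj : q ^ j = (((2:ℝ) ^ j) ^ 3) ^ 8 / (((7:ℝ) ^ j) ^ 8 * ((2:ℝ) ^ j) ^ 3) := by
      rw [hqdef, div_pow, ← pow_mul, mul_comm 8 j, pow_mul, div_pow, div_pow, h8j]
      rw [div_div]
    have h18n : ((1:ℝ)/8) ^ n = 1 / ((2:ℝ) ^ n) ^ 3 := by
      rw [div_pow, one_pow, h8n]
    have hbj : (b j) ^ 8 = (δ / 128) ^ 8 * ((7:ℝ) ^ j) ^ 8 / (((2:ℝ) ^ j) ^ 3) ^ 8 := by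
      rw [hbdef]
      dsimp only
      rw [mul_pow, div_pow (7:ℝ), h8j]
      ring
    have hpow : ((2:ℝ)) ^ (n + j + 1) = 2 * (2 ^ n * 2 ^ j) := by
      rw [pow_succ, pow_add]
      ring
    rw [hqj, h18n, hbj, hpow, hKKdef, pow_add]
    field_simp
  -- put everything together
  calc P {ω | ¬ SSe d (W ω) n ≤ ENNReal.ofReal (δ / 16)}
      ≤ P (⋃ j : ℕ, ⋃ k ∈ Finset.range (2 ^ (n + j + 1)),
          {ω | ENNReal.ofReal ((b j) ^ 8) ≤ ENNReal.ofReal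
            (‖W ω (((k:ℝ) + 1) / 2 ^ (n + j)) - W ω ((k:ℝ) / 2 ^ (n + j))‖ ^ 8)}) :=
        measure_mono hincl
    _ ≤ ∑' j : ℕ, P (⋃ k ∈ Finset.range (2 ^ (n + j + 1)),
          {ω | ENNReal.ofReal ((b j) ^ 8) ≤ ENNReal.ofReal
            (‖W ω (((k:ℝ) + 1) / 2 ^ (n + j)) - W ω ((k:ℝ) / 2 ^ (n + j))‖ ^ 8)}) :=
        measure_iUnion_le _
    _ ≤ ∑' j : ℕ, ∑ k ∈ Finset.range (2 ^ (n + j + 1)),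
          P {ω | ENNReal.ofReal ((b j) ^ 8) ≤ ENNReal.ofReal
            (‖W ω (((k:ℝ) + 1) / 2 ^ (n + j)) - W ω ((k:ℝ) / 2 ^ (n + j))‖ ^ 8)} := by
        apply ENNReal.tsum_le_tsum
        intro j
        exact measure_biUnion_finset_le _ _
    _ ≤ ∑' j : ℕ, ∑ _k ∈ Finset.range (2 ^ (n + j + 1)),
          ENNReal.ofReal ((d:ℝ) ^ 4 * (((2:ℝ) ^ (n + j))⁻¹) ^ 4 * Cr / (b j) ^ 8) := by
        apply ENNReal.tsum_le_tsum
        intro j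
        apply Finset.sum_le_sum
        intro k _
        exact hEv j (n + j) k
    _ = ∑' j : ℕ, ENNReal.ofReal ((KK * (1/8) ^ n) * q ^ j) := by
        apply tsum_congr
        intro j
        rw [Finset.sum_const, Finset.card_range, nsmul_eq_mul,
          show ((2 ^ (n + j + 1) : ℕ) : ℝ≥0∞) = ENNReal.ofReal ((2:ℝ) ^ (n + j + 1)) by
            rw [← ENNReal.ofReal_natCast]
            congr 1
            push_cast
            ring,
          ← ENNReal.ofReal_mul (by positivity), harith j]
    _ = ENNReal.ofReal (∑' j : ℕ, (KK * (1/8) ^ n) * q ^ j) :=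
        (ENNReal.ofReal_tsum_of_nonneg (fun j => by positivity)
          ((summable_geometric_of_lt_one hq0 hq1).mul_left _)).symm
    _ = ENNReal.ofReal ((KK * (1 - q)⁻¹) * (1/8) ^ n) := by
        rw [tsum_mul_left, tsum_geometric_of_lt_one hq0 hq1]
        congr 1
        ring

end Aux

/-- Fix `δ > 0` and let `W` be a standard `d`-dimensional Brownian motion
started at `0`. Then `Y_{0,1}(W) < ∞` almost surely and `E_0[Y_{0,1}(W)] < ∞`, where
`Y_{0,1}(W)` is the constrained Dirichlet energy `energyInf d δ (W ω) 0 1`. -/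
theorem energyInf_finite_and_integrable (d : ℕ) (hd : 1 ≤ d) (δ : ℝ) (hδ : 0 < δ)
    {Ω : Type*} [MeasurableSpace Ω] (P : Measure Ω) [IsProbabilityMeasure P]
    (W : Ω → ℝ → EuclideanSpace ℝ (Fin d)) (hW : IsBrownianMotion d P W 0) :
    (∀ᵐ ω ∂P, energyInf d δ (W ω) 0 1 < ⊤) ∧
      (∫⁻ ω, energyInf d δ (W ω) 0 1 ∂P) < ⊤ := by
  classical
  obtain ⟨K, hK0, hK⟩ := tail_bound hd hδ hW
  set A : ℕ → Set Ω := fun n => {ω | ¬ SSe d (W ω) n ≤ ENNReal.ofReal (δ / 16)} with hAdef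
  have hAmeas : ∀ n, MeasurableSet (A n) := by
    intro n
    have h1 : MeasurableSet {ω | SSe d (W ω) n ≤ ENNReal.ofReal (δ / 16)} :=
      measurableSet_le (measurable_SSe hW n) measurable_const
    exact h1.compl
  -- a.e. there is a good scale
  have hae_ex : ∀ᵐ ω ∂P, ∃ n, SSe d (W ω) n ≤ ENNReal.ofReal (δ / 16) := by
    rw [ae_iff]
    have hsub : ∀ n : ℕ, {ω | ¬ ∃ n, SSe d (W ω) n ≤ ENNReal.ofReal (δ / 16)} ⊆ A n := by
      intro n ω hω hle
      exact hω ⟨n, hle⟩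
    have hle : ∀ n : ℕ, P {ω | ¬ ∃ n, SSe d (W ω) n ≤ ENNReal.ofReal (δ / 16)}
        ≤ ENNReal.ofReal (K * (1/8) ^ n) := fun n => (measure_mono (hsub n)).trans (hK n)
    have htend : Filter.Tendsto (fun n : ℕ => ENNReal.ofReal (K * (1/8) ^ n)) Filter.atTop
        (nhds 0) := by
      have h1 : Filter.Tendsto (fun n : ℕ => K * (1/8:ℝ) ^ n) Filter.atTop (nhds 0) := by
        have := (tendsto_pow_atTop_nhds_zero_of_lt_one (by norm_num : (0:ℝ) ≤ 1/8)
          (by norm_num : (1/8:ℝ) < 1)).const_mul K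
        simpa using this
      have := ENNReal.tendsto_ofReal h1
      simpa using this
    have h0 := ge_of_tendsto htend (Filter.Eventually.of_forall hle)
    exact le_antisymm h0 zero_le
  -- pointwise bound by an integrable function
  have hpt : ∀ᵐ ω ∂P, energyInf d δ (W ω) 0 1 ≤ ENNReal.ofReal (δ ^ 2) *
      (1 + ∑' n : ℕ, (4:ℝ≥0∞) ^ (n+1) * (A n).indicator (fun _ => (1:ℝ≥0∞)) ω) := by
    filter_upwards [hW.cont, hae_ex] with ω hcont hex
    have hbound := energy_bound hδ hcont (Nat.find hex) (Nat.find_spec hex)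
    refine hbound.trans ?_
    have hsplit : ENNReal.ofReal (δ ^ 2 * 4 ^ (Nat.find hex))
        = ENNReal.ofReal (δ ^ 2) * (4:ℝ≥0∞) ^ (Nat.find hex) := by
      rw [ENNReal.ofReal_mul (by positivity : (0:ℝ) ≤ δ ^ 2)]
      congr 1
      rw [ENNReal.ofReal_pow (by norm_num : (0:ℝ) ≤ 4)]
      norm_num
    rw [hsplit]
    gcongr
    rcases Nat.eq_zero_or_pos (Nat.find hex) with h0 | hpos
    · rw [h0, pow_zero]
      exact le_self_add
    · obtain ⟨n, hn⟩ : ∃ n, Nat.find hex = n + 1 := ⟨Nat.find hex - 1, by omega⟩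
      have hmem : ω ∈ A n := Nat.find_min hex (by omega)
      rw [hn]
      calc (4:ℝ≥0∞) ^ (n+1) = 4 ^ (n+1) * (A n).indicator (fun _ => (1:ℝ≥0∞)) ω := by
            rw [Set.indicator_of_mem hmem, mul_one]
        _ ≤ ∑' m : ℕ, (4:ℝ≥0∞) ^ (m+1) * (A m).indicator (fun _ => (1:ℝ≥0∞)) ω :=
            ENNReal.le_tsum n
        _ ≤ 1 + ∑' m : ℕ, (4:ℝ≥0∞) ^ (m+1) * (A m).indicator (fun _ => (1:ℝ≥0∞)) ω :=
            le_add_self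
  -- the bound is integrable
  have hFmeas : Measurable fun ω => ENNReal.ofReal (δ ^ 2) *
      (1 + ∑' n : ℕ, (4:ℝ≥0∞) ^ (n+1) * (A n).indicator (fun _ => (1:ℝ≥0∞)) ω) := by
    apply Measurable.const_mul
    apply Measurable.const_add
    exact Measurable.ennreal_tsum fun n =>
      (measurable_const.indicator (hAmeas n)).const_mul _
  have hFint : (∫⁻ ω, ENNReal.ofReal (δ ^ 2) *
      (1 + ∑' n : ℕ, (4:ℝ≥0∞) ^ (n+1) * (A n).indicator (fun _ => (1:ℝ≥0∞)) ω) ∂P) < ⊤ := by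
    have h1 : (∫⁻ ω, ENNReal.ofReal (δ ^ 2) *
        (1 + ∑' n : ℕ, (4:ℝ≥0∞) ^ (n+1) * (A n).indicator (fun _ => (1:ℝ≥0∞)) ω) ∂P)
        = ENNReal.ofReal (δ ^ 2) * (1 + ∑' n : ℕ, (4:ℝ≥0∞) ^ (n+1) * P (A n)) := by
      rw [lintegral_const_mul _ (by
        apply Measurable.const_add
        exact Measurable.ennreal_tsum fun n =>
          (measurable_const.indicator (hAmeas n)).const_mul _)]
      congr 1
      rw [lintegral_add_left measurable_const, lintegral_const, measure_univ, mul_one]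
      congr 1
      rw [lintegral_tsum (fun n =>
        ((measurable_const.indicator (hAmeas n)).const_mul _).aemeasurable)]
      apply tsum_congr
      intro n
      rw [lintegral_const_mul _ (measurable_const.indicator (hAmeas n))]
      congr 1
      exact lintegral_indicator_one (hAmeas n)
    rw [h1]
    have h2 : (∑' n : ℕ, (4:ℝ≥0∞) ^ (n+1) * P (A n))
        ≤ ENNReal.ofReal (∑' n : ℕ, 4 * K * (1/2:ℝ) ^ n) := by
      rw [ENNReal.ofReal_tsum_of_nonneg (fun n => by positivity)
        ((summable_geometric_of_lt_one (by norm_num) (by norm_num)).mul_left _)]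
      apply ENNReal.tsum_le_tsum
      intro n
      calc (4:ℝ≥0∞) ^ (n+1) * P (A n) ≤ (4:ℝ≥0∞) ^ (n+1) * ENNReal.ofReal (K * (1/8) ^ n) := by
            gcongr
            exact hK n
        _ = ENNReal.ofReal ((4:ℝ) ^ (n+1) * (K * (1/8) ^ n)) := by
            rw [ENNReal.ofReal_mul (by positivity : (0:ℝ) ≤ (4:ℝ) ^ (n+1))]
            congr 1
            rw [ENNReal.ofReal_pow (by norm_num : (0:ℝ) ≤ 4)]
            norm_num
        _ = ENNReal.ofReal (4 * K * (1/2:ℝ) ^ n) := by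
            congr 1
            rw [pow_succ, mul_comm ((4:ℝ) ^ n) 4]
            rw [show (4:ℝ) * 4 ^ n * (K * (1/8) ^ n) = 4 * K * (4 ^ n * (1/8) ^ n) by ring,
              ← mul_pow]
            norm_num
    refine ENNReal.mul_lt_top ENNReal.ofReal_lt_top ?_
    refine ENNReal.add_lt_top.mpr ⟨ENNReal.one_lt_top, ?_⟩
    exact lt_of_le_of_lt h2 ENNReal.ofReal_lt_top
  have hFae : ∀ᵐ ω ∂P, ENNReal.ofReal (δ ^ 2) *
      (1 + ∑' n : ℕ, (4:ℝ≥0∞) ^ (n+1) * (A n).indicator (fun _ => (1:ℝ≥0∞)) ω) < ⊤ :=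
    ae_lt_top hFmeas hFint.ne
  constructor
  · filter_upwards [hpt, hFae] with ω h1 h2
    exact lt_of_le_of_lt h1 h2
  · exact lt_of_le_of_lt (lintegral_mono_ae hpt) hFint

end
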